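/- Let Y₁, Y₂ be two channels with common finite input alphabet. Then the condition 'I(X;Y₁|U) - I(X;Y₂|U) ≥ I(X;Y₁) - I(X;Y₂) for all Markov chains U → X → (Y₁,Y₂)' is equivalent to 'I(U;Y₂) ≥ I(U;Y₁) for all Markov chains U → X → (Y₁,Y₂)'. -/

import Mathlib

open Real

/-- Mutual information (in bits) of a joint pmf `q` on a product of finite alphabets,
with the conventions `log 0 = 0`, `x / 0 = 0`. -/
noncomputable def mutualInfo {A B : Type*} [Fintype A] [Fintype B] (q : A → B → ℝ) : ℝ :=
  ∑ a, ∑ b, q a b * Real.logb 2 (q a b / ((∑ b', q a b') * (∑ a', q a' b)))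

/-- Conditional mutual information `I(A;B|U)` (in bits) of a joint pmf `r` on `U × A × B`. -/
noncomputable def condMutualInfo {U A B : Type*} [Fintype U] [Fintype A] [Fintype B]
    (r : U → A → B → ℝ) : ℝ :=
  ∑ u, ∑ a, ∑ b, r u a b *
    Real.logb 2 ((r u a b * (∑ a', ∑ b', r u a' b')) / ((∑ b', r u a b') * (∑ a', r u a' b)))

private lemma key {m n : ℕ} (W : Fin m → Fin n → ℝ)
    (hW : ∀ x y, 0 ≤ W x y) (hWs : ∀ x, ∑ y, W x y = 1)
    {k : ℕ} (q : Fin k → Fin m → ℝ) (hq : ∀ u x, 0 ≤ q u x) :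
    condMutualInfo (fun u x y => q u x * W x y)
      = mutualInfo (fun x y => (∑ u, q u x) * W x y)
        - mutualInfo (fun u y => ∑ x, q u x * W x y) := by
  -- notation
  set L : Fin k → Fin n → ℝ := fun u y =>
    logb 2 ((∑ x, q u x * W x y) / (∑ x, q u x)) with hL
  set T : Fin n → ℝ := fun y => logb 2 (∑ x, (∑ u, q u x) * W x y) with hT
  have hscol : ∀ y, ∑ u, ∑ x, q u x * W x y = ∑ x, (∑ u, q u x) * W x y := by
    intro y
    rw [Finset.sum_comm]
    exact Finset.sum_congr rfl fun x _ => (Finset.sum_mul _ _ _).symm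
  -- Step 1 : condMutualInfo
  have h1 : condMutualInfo (fun u x y => q u x * W x y)
      = ∑ u, ∑ x, ∑ y, q u x * W x y * (logb 2 (W x y) - L u y) := by
    simp only [condMutualInfo]
    refine Finset.sum_congr rfl fun u _ => Finset.sum_congr rfl fun x _ =>
      Finset.sum_congr rfl fun y _ => ?_
    have hrow : (∑ b', q u x * W x b') = q u x := by rw [← Finset.mul_sum, hWs, mul_one]
    have htot : (∑ a', ∑ b', q u a' * W a' b') = ∑ x', q u x' :=
      Finset.sum_congr rfl fun a _ => by rw [← Finset.mul_sum, hWs, mul_one]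
    rw [hrow, htot]
    by_cases h : q u x * W x y = 0
    · rw [h]; ring
    · rcases mul_ne_zero_iff.1 h with ⟨hq0, hW0⟩
      have hq0 : 0 < q u x := (hq u x).lt_of_ne (Ne.symm hq0)
      have hW0 : 0 < W x y := (hW x y).lt_of_ne (Ne.symm hW0)
      have hqU : 0 < ∑ x', q u x' :=
        lt_of_lt_of_le hq0 (Finset.single_le_sum (fun i _ => hq u i) (Finset.mem_univ x))
      have hs : 0 < ∑ x', q u x' * W x' y :=
        lt_of_lt_of_le (mul_pos hq0 hW0)
          (Finset.single_le_sum (fun i _ => mul_nonneg (hq u i) (hW i y)) (Finset.mem_univ x))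
      have harg : q u x * W x y * (∑ x', q u x') / (q u x * (∑ x', q u x' * W x' y))
          = W x y / ((∑ x', q u x' * W x' y) / (∑ x', q u x')) := by
        field_simp
      rw [harg, Real.logb_div hW0.ne' (div_pos hs hqU).ne', hL]
  -- Step 2 : mutualInfo (X;Y)
  have h2 : mutualInfo (fun x y => (∑ u, q u x) * W x y)
      = ∑ x, ∑ y, (∑ u, q u x) * W x y * (logb 2 (W x y) - T y) := by
    simp only [mutualInfo]
    refine Finset.sum_congr rfl fun x _ => Finset.sum_congr rfl fun y _ => ?_
    have hrow : (∑ b', (∑ u, q u x) * W x b') = ∑ u, q u x := by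
      rw [← Finset.mul_sum, hWs, mul_one]
    rw [hrow]
    by_cases h : (∑ u, q u x) * W x y = 0
    · rw [h]; ring
    · rcases mul_ne_zero_iff.1 h with ⟨hp0, hW0⟩
      have hp0 : 0 < ∑ u, q u x :=
        (Finset.sum_nonneg fun u _ => hq u x).lt_of_ne (Ne.symm hp0)
      have hW0 : 0 < W x y := (hW x y).lt_of_ne (Ne.symm hW0)
      have ht : 0 < ∑ x', (∑ u, q u x') * W x' y :=
        lt_of_lt_of_le (mul_pos hp0 hW0)
          (Finset.single_le_sum
            (fun i _ => mul_nonneg (Finset.sum_nonneg fun u _ => hq u i) (hW i y))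
            (Finset.mem_univ x))
      have harg : (∑ u, q u x) * W x y / ((∑ u, q u x) * (∑ x', (∑ u, q u x') * W x' y))
          = W x y / (∑ x', (∑ u, q u x') * W x' y) := by
        field_simp
      rw [harg, Real.logb_div hW0.ne' ht.ne', hT]
  -- Step 3 : mutualInfo (U;Y)
  have h3 : mutualInfo (fun u y => ∑ x, q u x * W x y)
      = ∑ u, ∑ y, (∑ x, q u x * W x y) * (L u y - T y) := by
    simp only [mutualInfo]
    refine Finset.sum_congr rfl fun u _ => Finset.sum_congr rfl fun y _ => ?_
    have hrow : (∑ b', ∑ x, q u x * W x b') = ∑ x, q u x := by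
      rw [Finset.sum_comm]
      exact Finset.sum_congr rfl fun x _ => by rw [← Finset.mul_sum, hWs, mul_one]
    rw [hrow, hscol y]
    by_cases h : (∑ x, q u x * W x y) = 0
    · rw [h]; ring
    · have hs : 0 < ∑ x, q u x * W x y :=
        (Finset.sum_nonneg fun x _ => mul_nonneg (hq u x) (hW x y)).lt_of_ne (Ne.symm h)
      have hqU : 0 < ∑ x, q u x := by
        refine lt_of_lt_of_le hs (Finset.sum_le_sum fun x _ => ?_)
        calc q u x * W x y ≤ q u x * 1 := by
              refine mul_le_mul_of_nonneg_left ?_ (hq u x)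
              calc W x y ≤ ∑ y', W x y' :=
                    Finset.single_le_sum (fun i _ => hW x i) (Finset.mem_univ y)
                _ = 1 := hWs x
          _ = q u x := mul_one _
      have ht : 0 < ∑ x, (∑ u, q u x) * W x y := by
        rw [← hscol y]
        exact lt_of_lt_of_le hs (Finset.single_le_sum
          (fun i _ => Finset.sum_nonneg fun x _ => mul_nonneg (hq i x) (hW x y))
          (Finset.mem_univ u))
      have harg : (∑ x, q u x * W x y) / ((∑ x, q u x) * (∑ x, (∑ u, q u x) * W x y))
          = ((∑ x, q u x * W x y) / (∑ x, q u x)) / (∑ x, (∑ u, q u x) * W x y) := by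
        rw [div_div]
      rw [harg, Real.logb_div (div_pos hs hqU).ne' ht.ne', hL, hT]
  rw [h1, h2, h3]
  -- rearrange triple sums
  have e2 : ∑ x, ∑ y, (∑ u, q u x) * W x y * (logb 2 (W x y) - T y)
      = ∑ u, ∑ x, ∑ y, q u x * W x y * (logb 2 (W x y) - T y) := by
    calc ∑ x, ∑ y, (∑ u, q u x) * W x y * (logb 2 (W x y) - T y)
        = ∑ x, ∑ y, ∑ u, q u x * W x y * (logb 2 (W x y) - T y) :=
          Finset.sum_congr rfl fun x _ => Finset.sum_congr rfl fun y _ => by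
            rw [Finset.sum_mul, Finset.sum_mul]
      _ = ∑ x, ∑ u, ∑ y, q u x * W x y * (logb 2 (W x y) - T y) :=
          Finset.sum_congr rfl fun x _ => Finset.sum_comm
      _ = ∑ u, ∑ x, ∑ y, q u x * W x y * (logb 2 (W x y) - T y) := Finset.sum_comm
  have e3 : ∑ u, ∑ y, (∑ x, q u x * W x y) * (L u y - T y)
      = ∑ u, ∑ x, ∑ y, q u x * W x y * (L u y - T y) := by
    refine Finset.sum_congr rfl fun u _ => ?_
    calc ∑ y, (∑ x, q u x * W x y) * (L u y - T y)
        = ∑ y, ∑ x, q u x * W x y * (L u y - T y) :=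
          Finset.sum_congr rfl fun y _ => by rw [Finset.sum_mul]
      _ = ∑ x, ∑ y, q u x * W x y * (L u y - T y) := Finset.sum_comm
  rw [e2, e3, ← Finset.sum_sub_distrib]
  refine Finset.sum_congr rfl fun u _ => ?_
  rw [← Finset.sum_sub_distrib]
  refine Finset.sum_congr rfl fun x _ => ?_
  rw [← Finset.sum_sub_distrib]
  exact Finset.sum_congr rfl fun y _ => by ring

/-- The condition I(X;Y₁|U) - I(X;Y₂|U) ≥ I(X;Y₁) - I(X;Y₂) for all Markov chains
U → X → (Y₁,Y₂) is equivalent to I(U;Y₂) ≥ I(U;Y₁) for all such Markov chains. -/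
theorem stmt15 {m n₁ n₂ : ℕ} (W₁ : Fin m → Fin n₁ → ℝ) (W₂ : Fin m → Fin n₂ → ℝ)
    (hW₁ : ∀ x y, 0 ≤ W₁ x y) (hW₁s : ∀ x, ∑ y, W₁ x y = 1)
    (hW₂ : ∀ x y, 0 ≤ W₂ x y) (hW₂s : ∀ x, ∑ y, W₂ x y = 1) :
    (∀ (k : ℕ) (q : Fin k → Fin m → ℝ), (∀ u x, 0 ≤ q u x) → (∑ u, ∑ x, q u x) = 1 →
        mutualInfo (fun x y₁ => (∑ u, q u x) * W₁ x y₁)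
            - mutualInfo (fun x y₂ => (∑ u, q u x) * W₂ x y₂)
          ≤ condMutualInfo (fun u x y₁ => q u x * W₁ x y₁)
            - condMutualInfo (fun u x y₂ => q u x * W₂ x y₂)) ↔
    (∀ (k : ℕ) (q : Fin k → Fin m → ℝ), (∀ u x, 0 ≤ q u x) → (∑ u, ∑ x, q u x) = 1 →
        mutualInfo (fun u y₁ => ∑ x, q u x * W₁ x y₁)
          ≤ mutualInfo (fun u y₂ => ∑ x, q u x * W₂ x y₂)) := by
  constructor <;>
  · intro h k q hq hs
    have h1 := key W₁ hW₁ hW₁s q hq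
    have h2 := key W₂ hW₂ hW₂s q hq
    have := h k q hq hs
    linarith
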